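/- Let α > 1/2 and set γ(α) = α/(2α−1) and z(y,α) = y²(2α−1)/2. Then lim_{y → 0⁺} [ α·y²·U(γ(α)+1, 5/2, z(y,α)) − U(γ(α), 3/2, z(y,α)) ] = 2√π / Γ(γ(α) − 1/2). -/

import Mathlib

open Real Filter Polynomial

/-- Confluent hypergeometric function of the first kind,
`M(γ,β,z) = ∑ (γ)⁽ⁿ⁾ zⁿ / ((β)⁽ⁿ⁾ n!)`. -/
noncomputable def M (γ β z : ℝ) : ℝ :=
  ∑' n : ℕ, ((ascPochhammer ℝ n).eval γ * z ^ n) /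
    ((ascPochhammer ℝ n).eval β * (Nat.factorial n : ℝ))

/-- Confluent hypergeometric function of the second kind (for `z > 0`). -/
noncomputable def U (γ β z : ℝ) : ℝ :=
  Real.Gamma (1 - β) / Real.Gamma (γ - β + 1) * M γ β z +
    Real.Gamma (β - 1) / Real.Gamma γ * z ^ (1 - β) * M (γ - β + 1) (2 - β) z

noncomputable def hgU (γ β : ℝ) (n : ℕ) : ℝ :=
  |(ascPochhammer ℝ n).eval γ| / (|(ascPochhammer ℝ n).eval β| * (Nat.factorial n : ℝ))

lemma poch_ne_zero {β : ℝ} (hβ : ∀ n : ℕ, β + (n : ℝ) ≠ 0) (n : ℕ) :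
    (ascPochhammer ℝ n).eval β ≠ 0 := by
  induction n with
  | zero => simp
  | succ k ih =>
      rw [ascPochhammer_succ_eval]
      exact mul_ne_zero ih (hβ k)

lemma hgU_summable (γ β : ℝ) (hβ : ∀ n : ℕ, β + (n : ℝ) ≠ 0) : Summable (hgU γ β) := by
  apply summable_of_ratio_norm_eventually_le (r := 1/2) (by norm_num)
  filter_upwards [eventually_ge_atTop (⌈|γ| + |β| + 4⌉₊)] with n hn
  have hn' : |γ| + |β| + 4 ≤ (n : ℝ) := le_trans (Nat.le_ceil _) (by exact_mod_cast hn)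
  have hb : (ascPochhammer ℝ n).eval β ≠ 0 := poch_ne_zero hβ n
  have hbn : β + (n : ℝ) ≠ 0 := hβ n
  have hfac : (0:ℝ) < (Nat.factorial n : ℝ) := by positivity
  have key : hgU γ β (n+1) = hgU γ β n * (|γ + n| / (|β + n| * (n+1))) := by
    simp only [hgU, ascPochhammer_succ_eval, Nat.factorial_succ, abs_mul,
      Nat.cast_mul, Nat.cast_add, Nat.cast_one]
    rw [div_mul_div_comm]
    congr 1
    ring
  have h1 : |γ + (n:ℝ)| ≤ |γ| + n := by
    calc |γ + (n:ℝ)| ≤ |γ| + |(n:ℝ)| := abs_add_le _ _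
    _ = |γ| + n := by rw [abs_of_nonneg (by positivity : (0:ℝ) ≤ (n:ℝ))]
  have h2 : (n:ℝ) - |β| ≤ |β + n| := by
    have h3 : |(n:ℝ)| ≤ |β + n| + |β| := by
      calc |(n:ℝ)| = |(β + n) + (-β)| := by norm_num
      _ ≤ |β + n| + |(-β)| := abs_add_le _ _
      _ = |β + n| + |β| := by rw [abs_neg]
    rw [abs_of_nonneg (by positivity : (0:ℝ) ≤ (n:ℝ))] at h3
    linarith
  have hratio : |γ + (n:ℝ)| / (|β + n| * (n+1)) ≤ 1/2 := by
    rw [div_le_iff₀ (by positivity : (0:ℝ) < |β + (n:ℝ)| * (n+1))]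
    have hg : (0:ℝ) ≤ |γ| := abs_nonneg _
    have hb' : (0:ℝ) ≤ |β| := abs_nonneg _
    nlinarith [h1, h2, hn']
  have hgU_nonneg : ∀ m, 0 ≤ hgU γ β m := fun m => by unfold hgU; positivity
  rw [Real.norm_eq_abs, Real.norm_eq_abs, abs_of_nonneg (hgU_nonneg (n+1)),
    abs_of_nonneg (hgU_nonneg n), key, mul_comm (1/2 : ℝ)]
  exact mul_le_mul_of_nonneg_left hratio (hgU_nonneg n)

lemma Mterm_bound (γ β : ℝ) (hβ : ∀ n : ℕ, β + (n : ℝ) ≠ 0) (n : ℕ) {z : ℝ}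
    (hz : z ∈ Set.Icc (-1:ℝ) 1) :
    ‖(ascPochhammer ℝ n).eval γ * z ^ n /
      ((ascPochhammer ℝ n).eval β * (Nat.factorial n : ℝ))‖ ≤ hgU γ β n := by
  have hz1 : |z| ≤ 1 := abs_le.2 ⟨hz.1, hz.2⟩
  have hzn : |z| ^ n ≤ 1 := pow_le_one₀ (abs_nonneg _) hz1
  rw [Real.norm_eq_abs, abs_div, abs_mul, abs_mul, abs_pow, hgU]
  rw [abs_of_nonneg (by positivity : (0:ℝ) ≤ (Nat.factorial n : ℝ))]
  have hden : 0 < |(ascPochhammer ℝ n).eval β| * (Nat.factorial n : ℝ) :=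
    mul_pos (abs_pos.2 (poch_ne_zero hβ n)) (by positivity)
  gcongr
  exact mul_le_of_le_one_right (abs_nonneg _) hzn

lemma M_summable (γ β : ℝ) (hβ : ∀ n : ℕ, β + (n : ℝ) ≠ 0) {z : ℝ}
    (hz : z ∈ Set.Icc (-1:ℝ) 1) :
    Summable (fun n : ℕ => (ascPochhammer ℝ n).eval γ * z ^ n /
      ((ascPochhammer ℝ n).eval β * (Nat.factorial n : ℝ))) :=
  Summable.of_norm_bounded (hgU_summable γ β hβ) (fun n => Mterm_bound γ β hβ n hz)

lemma M_continuousOn (γ β : ℝ) (hβ : ∀ n : ℕ, β + (n : ℝ) ≠ 0) :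
    ContinuousOn (fun z => M γ β z) (Set.Icc (-1:ℝ) 1) := by
  apply continuousOn_tsum (u := hgU γ β)
  · intro n
    exact ((continuous_const.mul (continuous_pow n)).div_const _).continuousOn
  · exact hgU_summable γ β hβ
  · exact fun n z hz => Mterm_bound γ β hβ n hz

lemma M_zero (γ β : ℝ) : M γ β 0 = 1 := by
  rw [M, tsum_eq_single 0]
  · simp
  · intro n hn
    simp [zero_pow hn]

lemma M_tendsto (γ β : ℝ) (hβ : ∀ n : ℕ, β + (n : ℝ) ≠ 0) :
    Tendsto (fun z => M γ β z) (nhdsWithin 0 (Set.Ioc (0:ℝ) 1)) (nhds 1) := by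
  have h0 : (0:ℝ) ∈ Set.Icc (-1:ℝ) 1 := by norm_num
  have := (M_continuousOn γ β hβ).continuousWithinAt h0
  rw [ContinuousWithinAt, M_zero] at this
  exact this.mono_left (nhdsWithin_mono 0 (fun x hx => ⟨by linarith [hx.1], hx.2⟩))

/-- coefficients of the difference `M a (-1/2) z - M a (1/2) z`. -/
noncomputable def eterm (a : ℝ) (n : ℕ) : ℝ :=
  (ascPochhammer ℝ n).eval a / ((ascPochhammer ℝ n).eval (-1/2) * (Nat.factorial n : ℝ)) -
    (ascPochhammer ℝ n).eval a / ((ascPochhammer ℝ n).eval (1/2) * (Nat.factorial n : ℝ))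

lemma hbneg : ∀ n : ℕ, (-1/2 : ℝ) + (n : ℝ) ≠ 0 := by
  intro n
  rcases Nat.eq_zero_or_pos n with h | h
  · norm_num [h]
  · have : (1:ℝ) ≤ (n:ℝ) := by exact_mod_cast h
    linarith [this]

lemma hbpos : ∀ n : ℕ, (1/2 : ℝ) + (n : ℝ) ≠ 0 := by
  intro n
  positivity

/-- tail function `h a z = ∑' n, eterm a (n+1) * z^n`. -/
noncomputable def htail (a : ℝ) (z : ℝ) : ℝ := ∑' n : ℕ, eterm a (n + 1) * z ^ n

lemma eterm_zero (a : ℝ) : eterm a 0 = 0 := by simp [eterm]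

lemma htail_bound (a : ℝ) (n : ℕ) {z : ℝ} (hz : z ∈ Set.Icc (-1:ℝ) 1) :
    ‖eterm a (n + 1) * z ^ n‖ ≤ hgU a (-1/2) (n+1) + hgU a (1/2) (n+1) := by
  have hz1 : |z| ≤ 1 := abs_le.2 ⟨hz.1, hz.2⟩
  have hzn : |z| ^ n ≤ 1 := pow_le_one₀ (abs_nonneg _) hz1
  have h1 : ‖eterm a (n+1)‖ ≤ hgU a (-1/2) (n+1) + hgU a (1/2) (n+1) := by
    refine (norm_sub_le _ _).trans ?_
    gcongr
    · rw [Real.norm_eq_abs, abs_div, abs_mul,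
        abs_of_nonneg (by positivity : (0:ℝ) ≤ ((n+1).factorial : ℝ)), hgU]
    · rw [Real.norm_eq_abs, abs_div, abs_mul,
        abs_of_nonneg (by positivity : (0:ℝ) ≤ ((n+1).factorial : ℝ)), hgU]
  calc ‖eterm a (n+1) * z ^ n‖ = ‖eterm a (n+1)‖ * |z| ^ n := by
        rw [norm_mul, Real.norm_eq_abs (z ^ n), abs_pow]
  _ ≤ ‖eterm a (n+1)‖ * 1 := mul_le_mul_of_nonneg_left hzn (norm_nonneg _)
  _ = ‖eterm a (n+1)‖ := mul_one _
  _ ≤ _ := h1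

lemma htail_summable_bound (a : ℝ) :
    Summable (fun n : ℕ => hgU a (-1/2) (n+1) + hgU a (1/2) (n+1)) :=
  ((summable_nat_add_iff 1).2 (hgU_summable a (-1/2) hbneg)).add
    ((summable_nat_add_iff 1).2 (hgU_summable a (1/2) hbpos))

lemma htail_continuousOn (a : ℝ) :
    ContinuousOn (htail a) (Set.Icc (-1:ℝ) 1) := by
  apply continuousOn_tsum (fun n => (continuous_const.mul (continuous_pow n)).continuousOn)
    (htail_summable_bound a)
  exact fun n z hz => htail_bound a n hz

lemma htail_tendsto (a : ℝ) :
    Tendsto (htail a) (nhdsWithin 0 (Set.Ioc (0:ℝ) 1)) (nhds (htail a 0)) := by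
  have h0 : (0:ℝ) ∈ Set.Icc (-1:ℝ) 1 := by norm_num
  have := (htail_continuousOn a).continuousWithinAt h0
  exact this.mono_left (nhdsWithin_mono 0 (fun x hx => ⟨by linarith [hx.1], hx.2⟩))

/-- The key splitting identity. -/
lemma M_diff_eq (a : ℝ) {z : ℝ} (hz : z ∈ Set.Icc (-1:ℝ) 1) :
    M a (-1/2) z - M a (1/2) z = z * htail a z := by
  have s1 := M_summable a (-1/2) hbneg hz
  have s2 := M_summable a (1/2) hbpos hz
  have key : M a (-1/2) z - M a (1/2) z = ∑' n : ℕ, eterm a n * z ^ n := by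
    rw [M, M, ← Summable.tsum_sub s1 s2]
    congr 1
    ext n
    rw [eterm]
    ring
  rw [key]
  have hsum : Summable (fun n : ℕ => eterm a n * z ^ n) := by
    apply Summable.congr (s1.sub s2)
    intro n
    rw [eterm]
    ring
  rw [Summable.tsum_eq_zero_add hsum, eterm_zero, zero_mul, zero_add, htail, ← tsum_mul_left]
  congr 1
  ext n
  ring

theorem stmt_16 (α : ℝ) (hα : 1 / 2 < α) :
    Tendsto
      (fun y : ℝ =>
        α * y ^ 2 * U (α / (2 * α - 1) + 1) (5 / 2) (y ^ 2 * (2 * α - 1) / 2) -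
          U (α / (2 * α - 1)) (3 / 2) (y ^ 2 * (2 * α - 1) / 2))
      (nhdsWithin 0 (Set.Ioi (0 : ℝ)))
      (nhds (2 * Real.sqrt Real.pi / Real.Gamma (α / (2 * α - 1) - 1 / 2))) := by
  have h2α : (0:ℝ) < 2 * α - 1 := by linarith
  set a := α / (2 * α - 1) with ha_def
  have ha2 : (1:ℝ)/2 < a := by
    rw [ha_def, lt_div_iff₀ h2α]; linarith
  have ha0 : 0 < a := lt_trans (by norm_num) ha2
  have ha12 : 0 < a - 1/2 := by linarith
  have hΓa : Real.Gamma a ≠ 0 := (Real.Gamma_pos_of_pos ha0).ne'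
  have hGa1 : Real.Gamma (a + 1) = a * Real.Gamma a := Real.Gamma_add_one ha0.ne'
  have hG32 : Real.Gamma (5/2 - 1 : ℝ) = Real.sqrt Real.pi / 2 := by
    rw [show (5/2 - 1 : ℝ) = 1/2 + 1 by norm_num, Real.Gamma_add_one (by norm_num),
      Real.Gamma_one_half_eq]
    ring
  have hG12 : Real.Gamma (3/2 - 1 : ℝ) = Real.sqrt Real.pi := by
    rw [show (3/2 - 1 : ℝ) = 1/2 by norm_num, Real.Gamma_one_half_eq]
  have hGm12 : Real.Gamma (1 - 3/2 : ℝ) = -2 * Real.sqrt Real.pi := by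
    have h := Real.Gamma_add_one (show (-1/2 : ℝ) ≠ 0 by norm_num)
    rw [show (-1/2 : ℝ) + 1 = 1/2 by norm_num, Real.Gamma_one_half_eq] at h
    rw [show (1 - 3/2 : ℝ) = -1/2 by norm_num]
    linarith
  -- the rescaled variable
  set zf : ℝ → ℝ := fun y => y ^ 2 * (2 * α - 1) / 2 with hzf_def
  have hz_tendsto : Tendsto zf (nhdsWithin 0 (Set.Ioi (0:ℝ)))
      (nhdsWithin 0 (Set.Ioc (0:ℝ) 1)) := by
    rw [tendsto_nhdsWithin_iff]
    have hc : Tendsto zf (nhds 0) (nhds 0) := by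
      have : Continuous zf := by fun_prop
      simpa using this.tendsto' 0 0 (by simp [hzf_def])
    refine ⟨hc.mono_left nhdsWithin_le_nhds, ?_⟩
    have h1 : ∀ᶠ y in nhdsWithin 0 (Set.Ioi (0:ℝ)), zf y < 1 :=
      (hc.mono_left nhdsWithin_le_nhds).eventually_lt_const (by norm_num)
    filter_upwards [h1, eventually_mem_nhdsWithin] with y hy1 hy2
    have : 0 < zf y := by
      have : 0 < y := hy2
      positivity
    exact ⟨this, hy1.le⟩
  have hβ52 : ∀ n : ℕ, (5/2 : ℝ) + (n : ℝ) ≠ 0 := fun n => by positivity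
  have hβ32 : ∀ n : ℕ, (3/2 : ℝ) + (n : ℝ) ≠ 0 := fun n => by positivity
  have hzl : Tendsto zf (nhdsWithin 0 (Set.Ioi (0:ℝ))) (nhds 0) :=
    hz_tendsto.mono_right nhdsWithin_le_nhds
  have hM1 : Tendsto (fun y => M (a + 1) (5/2) (zf y)) (nhdsWithin 0 (Set.Ioi (0:ℝ)))
      (nhds 1) := (M_tendsto (a+1) (5/2) hβ52).comp hz_tendsto
  have hM3 : Tendsto (fun y => M a (3/2) (zf y)) (nhdsWithin 0 (Set.Ioi (0:ℝ)))
      (nhds 1) := (M_tendsto a (3/2) hβ32).comp hz_tendsto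
  have hht : Tendsto (fun y => htail (a - 1/2) (zf y)) (nhdsWithin 0 (Set.Ioi (0:ℝ)))
      (nhds (htail (a - 1/2) 0)) := (htail_tendsto (a - 1/2)).comp hz_tendsto
  have hsq : Tendsto (fun y => (zf y) ^ ((1:ℝ)/2)) (nhdsWithin 0 (Set.Ioi (0:ℝ)))
      (nhds 0) := by
    have : ∀ y : ℝ, (zf y) ^ ((1:ℝ)/2) = Real.sqrt (zf y) := fun y =>
      (Real.sqrt_eq_rpow _).symm
    simp only [this]
    have := (Real.continuous_sqrt.tendsto' 0 0 Real.sqrt_zero).comp hzl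
    exact this
  -- limit function
  set F : ℝ → ℝ := fun y =>
    2 * a * Real.Gamma (1 - 5/2) / Real.Gamma (a + 1 - 5/2 + 1) *
        (zf y * M (a + 1) (5/2) (zf y)) +
      Real.sqrt Real.pi / Real.Gamma a * ((zf y) ^ ((1:ℝ)/2) * htail (a - 1/2) (zf y)) -
      Real.Gamma (1 - 3/2) / Real.Gamma (a - 3/2 + 1) * M a (3/2) (zf y) with hF_def
  have hFlim : Tendsto F (nhdsWithin 0 (Set.Ioi (0:ℝ)))
      (nhds (2 * Real.sqrt Real.pi / Real.Gamma (a - 1/2))) := by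
    have h := (((hzl.mul hM1).const_mul
          (2 * a * Real.Gamma (1 - 5/2) / Real.Gamma (a + 1 - 5/2 + 1))).add
        ((hsq.mul hht).const_mul (Real.sqrt Real.pi / Real.Gamma a))).sub
      (hM3.const_mul (Real.Gamma (1 - 3/2) / Real.Gamma (a - 3/2 + 1)))
    convert h using 1
    rw [hGm12, show a - 3/2 + 1 = a - 1/2 by ring]
    ring
  refine Tendsto.congr' ?_ hFlim
  filter_upwards [hz_tendsto.eventually eventually_mem_nhdsWithin] with y hy
  obtain ⟨hz0, hz1⟩ := hy
  have hzIcc : zf y ∈ Set.Icc (-1:ℝ) 1 := ⟨by linarith, hz1⟩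
  have e1 : a + 1 - 5/2 + 1 = a - 1/2 := by ring
  have e2 : (2:ℝ) - 5/2 = -1/2 := by norm_num
  have e3 : a - 3/2 + 1 = a - 1/2 := by ring
  have e4 : (2:ℝ) - 3/2 = 1/2 := by norm_num
  -- rpow facts
  have hr1 : (zf y) ^ ((1:ℝ) - 5/2) = (zf y) ^ ((1:ℝ) - 3/2) / zf y := by
    rw [show (1:ℝ) - 5/2 = ((1:ℝ) - 3/2) + (-1) by norm_num, Real.rpow_add hz0,
      Real.rpow_neg_one]
    ring
  have hr2 : (zf y) ^ ((1:ℝ)/2) = (zf y) ^ ((1:ℝ) - 3/2) * zf y := by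
    rw [show (1:ℝ)/2 = ((1:ℝ) - 3/2) + 1 by norm_num, Real.rpow_add hz0, Real.rpow_one]
  have hdiff : M (a - 1/2) (-1/2) (zf y) - M (a - 1/2) (1/2) (zf y) =
      zf y * htail (a - 1/2) (zf y) := M_diff_eq (a - 1/2) hzIcc
  have hαy : α * y ^ 2 = 2 * a * zf y := by
    rw [ha_def, hzf_def]
    field_simp [h2α.ne']
    linear_combination (-y ^ 2) * (mul_inv_cancel₀ h2α.ne' : (2 * α - 1) * (2 * α - 1)⁻¹ = 1)
  rw [hF_def]
  simp only [U]
  rw [e1, e2, e3, e4, hr1, hr2, hαy]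
  have hM2 : M (a - 1/2) (-1/2) (zf y) =
      zf y * htail (a - 1/2) (zf y) + M (a - 1/2) (1/2) (zf y) := by linarith
  rw [hM2, hGa1, hG32, hG12]
  field_simp
  ring
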